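/- Let A, B ∈ ℂ^{n×n} admit a Weierstrass decomposition T·A·S = diag(J, I_{n−d}), T·B·S = diag(I_d, N) with N nilpotent, and suppose J = diag(J₁, J₂) is block diagonal with J₁ ∈ ℂ^{s×s}. Let Y, R ∈ ℂ^{n×s}, set U = S_{(:,1:s)} (S^{-1})_{(1:s,:)} Y, Ã = R*·A·U and B̃ = R*·B·U, and assume that the s×s matrices R*·(T^{-1})_{(:,1:s)} and (S^{-1})_{(1:s,:)}·Y are invertible. If y ∈ ℂ^s is nonzero and λ̃ ∈ ℂ satisfy Ã·y = λ̃·B̃·y, then U·y ≠ 0, A·(U·y) = λ̃·B·(U·y), and λ̃ is an eigenvalue of J₁ (det(λ̃I_s − J₁) = 0). That is, every eigenpair (λ̃, y) of the projected pencil (Ã, B̃) yields an eigenpair (λ̃, Uy) of the pencil (A, B) whose eigenvalue is an eigenvalue of J₁. -/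

import Mathlib

open Matrix

/-- Under a Weierstrass decomposition with `J = diag(J₁, J₂)`,
`U = S_{(:,1:s)} (S⁻¹)_{(1:s,:)} Y`, `Ã = R*·A·U`, `B̃ = R*·B·U`, with
`R*·(T⁻¹)_{(:,1:s)}` and `(S⁻¹)_{(1:s,:)}·Y` invertible: every eigenpair `(λ̃, y)` of
the projected pencil `(Ã, B̃)` with `y ≠ 0` yields `U·y ≠ 0`, `A·(Uy) = λ̃·B·(Uy)`,
and `det(λ̃ I_s − J₁) = 0`. -/
theorem stmt_13 (n d s : ℕ) (hs : s ≤ d) (hd : d ≤ n)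
    (A B S T : Matrix (Fin n) (Fin n) ℂ)
    (J : Matrix (Fin d) (Fin d) ℂ) (N : Matrix (Fin (n - d)) (Fin (n - d)) ℂ)
    (J₁ : Matrix (Fin s) (Fin s) ℂ) (J₂ : Matrix (Fin (d - s)) (Fin (d - s)) ℂ)
    (hS : IsUnit S) (hT : IsUnit T) (hN : IsNilpotent N)
    (hA : T * A * S =
      (Matrix.reindex (finSumFinEquiv.trans (finCongr (Nat.add_sub_cancel' hd)))
        (finSumFinEquiv.trans (finCongr (Nat.add_sub_cancel' hd))))
        (Matrix.fromBlocks J 0 0 1))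
    (hB : T * B * S =
      (Matrix.reindex (finSumFinEquiv.trans (finCongr (Nat.add_sub_cancel' hd)))
        (finSumFinEquiv.trans (finCongr (Nat.add_sub_cancel' hd))))
        (Matrix.fromBlocks 1 0 0 N))
    (hJ : J =
      (Matrix.reindex (finSumFinEquiv.trans (finCongr (Nat.add_sub_cancel' hs)))
        (finSumFinEquiv.trans (finCongr (Nat.add_sub_cancel' hs))))
        (Matrix.fromBlocks J₁ 0 0 J₂))
    (Y R : Matrix (Fin n) (Fin s) ℂ)
    (U : Matrix (Fin n) (Fin s) ℂ)
    (hU : U = S.submatrix id (Fin.castLE (hs.trans hd)) *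
      (S⁻¹.submatrix (Fin.castLE (hs.trans hd)) id * Y))
    (hRT : IsUnit (Rᴴ * T⁻¹.submatrix id (Fin.castLE (hs.trans hd))))
    (hSY : IsUnit (S⁻¹.submatrix (Fin.castLE (hs.trans hd)) id * Y)) :
    ∀ (y : Fin s → ℂ) (lam : ℂ), y ≠ 0 →
      (Rᴴ * A * U).mulVec y = lam • (Rᴴ * B * U).mulVec y →
      U.mulVec y ≠ 0 ∧
      A.mulVec (U.mulVec y) = lam • B.mulVec (U.mulVec y) ∧
      (lam • (1 : Matrix (Fin s) (Fin s) ℂ) - J₁).det = 0 := by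
  intro y lam hy h
  set c : Fin s → Fin n := Fin.castLE (hs.trans hd) with hc
  set e : Fin d ⊕ Fin (n - d) ≃ Fin n :=
    finSumFinEquiv.trans (finCongr (Nat.add_sub_cancel' hd)) with he
  set f : Fin s ⊕ Fin (d - s) ≃ Fin d :=
    finSumFinEquiv.trans (finCongr (Nat.add_sub_cancel' hs)) with hf
  have hec : ∀ j : Fin s, e.symm (c j) = Sum.inl (Fin.castLE hs j) := by
    intro j; rw [Equiv.symm_apply_eq]; ext; simp [he, hc]
  have hfc : ∀ j : Fin s, f (Sum.inl j) = Fin.castLE hs j := by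
    intro j; ext; simp [hf]
  have hfcs : ∀ j : Fin s, f.symm (Fin.castLE hs j) = Sum.inl j := by
    intro j; rw [Equiv.symm_apply_eq, hfc]
  have hSdet : IsUnit S.det := (Matrix.isUnit_iff_isUnit_det S).mp hS
  have hTdet : IsUnit T.det := (Matrix.isUnit_iff_isUnit_det T).mp hT
  set E : Matrix (Fin n) (Fin s) ℂ := S.submatrix id c with hE
  set F : Matrix (Fin s) (Fin n) ℂ := S⁻¹.submatrix c id with hF
  set G : Matrix (Fin n) (Fin s) ℂ := T⁻¹.submatrix id c with hG
  set P : Matrix (Fin n) (Fin s) ℂ := (1 : Matrix (Fin n) (Fin n) ℂ).submatrix id c with hP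
  have hcinj : Function.Injective c := Fin.castLE_injective _
  have hFE : F * E = (1 : Matrix (Fin s) (Fin s) ℂ) := by
    rw [hF, hE, ← Matrix.submatrix_mul S⁻¹ S c id c Function.bijective_id,
      Matrix.nonsing_inv_mul S hSdet, Matrix.submatrix_one c hcinj]
  have hmulsub : ∀ M K : Matrix (Fin n) (Fin n) ℂ,
      M * K.submatrix id c = (M * K).submatrix id c := by
    intro M K
    simpa using (Matrix.submatrix_mul M K id id c Function.bijective_id).symm
  -- Claim 2
  have claim2 : (Matrix.reindex e e
      (Matrix.fromBlocks (1 : Matrix (Fin d) (Fin d) ℂ) 0 0 N)).submatrix id c = P := by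
    ext i j
    simp only [Matrix.submatrix_apply, Matrix.reindex_apply, id_eq, hP]
    rw [hec j]
    rcases hi : e.symm i with a | b
    · have : i = c j ↔ a = Fin.castLE hs j := by
        rw [← e.symm.injective.eq_iff, hi, hec j, Sum.inl.injEq]
      simp [Matrix.one_apply, this]
    · have : i ≠ c j := by
        intro hij; rw [hij, hec j] at hi; cases hi
      simp [Matrix.one_apply, this]
  -- Claim 1
  have claim1 : (Matrix.reindex e e
      (Matrix.fromBlocks J 0 0 (1 : Matrix (Fin (n-d)) (Fin (n-d)) ℂ))).submatrix id c
        = P * J₁ := by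
    ext i j
    rw [Matrix.mul_apply]
    simp only [Matrix.submatrix_apply, Matrix.reindex_apply, id_eq, hP]
    rw [hec j]
    rcases hi : e.symm i with a | b
    · rw [Matrix.fromBlocks_apply₁₁, hJ]
      simp only [Matrix.reindex_apply, Matrix.submatrix_apply, ← he, ← hf]
      rw [hfcs j]
      rcases ha : f.symm a with a' | b'
      · have hia : i = c a' := by
          apply e.symm.injective
          rw [hi, hec a', ← hfc a', ← ha, Equiv.apply_symm_apply]
        simp [hia, Matrix.one_apply, hcinj.eq_iff, ite_mul]
      · have hnot : ∀ k : Fin s, i ≠ c k := by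
          intro k hk
          rw [hk, hec k, ← hfc k] at hi
          have : f.symm a = Sum.inl k := by
            rw [Sum.inl.injEq] at hi; rw [← hi, Equiv.symm_apply_apply]
          rw [ha] at this; cases this
        simp [Matrix.one_apply, hnot]
    · have hnot : ∀ k : Fin s, i ≠ c k := by
        intro k hk; rw [hk, hec k] at hi; cases hi
      simp [Matrix.one_apply, hnot]
  -- A * E and B * E
  have hAS : A * S = T⁻¹ * (Matrix.reindex e e (Matrix.fromBlocks J 0 0 1)) := by
    rw [← hA, ← Matrix.mul_assoc, ← Matrix.mul_assoc, Matrix.nonsing_inv_mul T hTdet,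
      Matrix.one_mul]
  have hBS : B * S = T⁻¹ * (Matrix.reindex e e (Matrix.fromBlocks 1 0 0 N)) := by
    rw [← hB, ← Matrix.mul_assoc, ← Matrix.mul_assoc, Matrix.nonsing_inv_mul T hTdet,
      Matrix.one_mul]
  have hTP : T⁻¹ * P = G := by rw [hP, hmulsub, Matrix.mul_one]
  have hAE : A * E = G * J₁ := by
    rw [hE, hmulsub, hAS, ← hmulsub, claim1, ← Matrix.mul_assoc, hTP]
  have hBE : B * E = G := by
    rw [hE, hmulsub, hBS, ← hmulsub, claim2, hTP]
  -- projected pencil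
  set W : Matrix (Fin s) (Fin s) ℂ := F * Y with hWdef
  have hWunit : IsUnit W := hSY
  have hWdet : IsUnit W.det := (Matrix.isUnit_iff_isUnit_det W).mp hWunit
  have hUE : U = E * W := hU
  have hKunit : IsUnit (Rᴴ * G) := hRT
  have hKdet : IsUnit (Rᴴ * G).det := (Matrix.isUnit_iff_isUnit_det _).mp hKunit
  have htA : Rᴴ * A * U = (Rᴴ * G) * (J₁ * W) := by
    rw [hUE, Matrix.mul_assoc, ← Matrix.mul_assoc A E W, hAE,
      Matrix.mul_assoc G J₁ W, ← Matrix.mul_assoc]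
  have htB : Rᴴ * B * U = (Rᴴ * G) * W := by
    rw [hUE, Matrix.mul_assoc, ← Matrix.mul_assoc B E W, hBE, ← Matrix.mul_assoc]
  set z : Fin s → ℂ := W.mulVec y with hz
  have hKinj : ∀ u v : Fin s → ℂ, (Rᴴ * G).mulVec u = (Rᴴ * G).mulVec v → u = v := by
    intro u v huv
    have := congrArg ((Rᴴ * G)⁻¹.mulVec) huv
    rwa [Matrix.mulVec_mulVec, Matrix.mulVec_mulVec, Matrix.nonsing_inv_mul _ hKdet,
      Matrix.one_mulVec, Matrix.one_mulVec] at this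
  have hzy : J₁.mulVec z = lam • z := by
    rw [htA, htB] at h
    have h' : (Rᴴ * G).mulVec ((J₁ * W).mulVec y)
        = (Rᴴ * G).mulVec (lam • W.mulVec y) := by
      rw [Matrix.mulVec_mulVec, Matrix.mulVec_smul, Matrix.mulVec_mulVec]
      exact h
    have h2 := hKinj _ _ h'
    calc J₁.mulVec z = (J₁ * W).mulVec y := by rw [hz, Matrix.mulVec_mulVec]
      _ = lam • W.mulVec y := h2
      _ = lam • z := by rw [← hz]
  have hz0 : z ≠ 0 := by
    intro h0
    apply hy
    have := congrArg (W⁻¹.mulVec) h0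
    rw [hz, Matrix.mulVec_mulVec, Matrix.nonsing_inv_mul W hWdet, Matrix.one_mulVec,
      Matrix.mulVec_zero] at this
    exact this
  have hUy : U.mulVec y = E.mulVec z := by
    rw [hUE, hz, Matrix.mulVec_mulVec]
  refine ⟨?_, ?_, ?_⟩
  · rw [hUy]
    intro h0
    apply hz0
    have := congrArg (F.mulVec) h0
    rw [Matrix.mulVec_mulVec, hFE, Matrix.one_mulVec, Matrix.mulVec_zero] at this
    exact this
  · calc A.mulVec (U.mulVec y) = (A * E).mulVec z := by rw [hUy, Matrix.mulVec_mulVec]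
      _ = G.mulVec (J₁.mulVec z) := by rw [hAE, ← Matrix.mulVec_mulVec]
      _ = lam • G.mulVec z := by rw [hzy, Matrix.mulVec_smul]
      _ = lam • (B * E).mulVec z := by rw [hBE]
      _ = lam • B.mulVec (E.mulVec z) := by rw [← Matrix.mulVec_mulVec]
      _ = lam • B.mulVec (U.mulVec y) := by rw [hUy]
  · apply (Matrix.exists_mulVec_eq_zero_iff).mp
    refine ⟨z, hz0, ?_⟩
    rw [Matrix.sub_mulVec, Matrix.smul_mulVec, Matrix.one_mulVec, hzy, sub_self]
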